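/- Let f : M_n(ℝ) → M_n(ℝ) satisfy the continuous-time group-affine condition f(A·B) = f(A)·B + A·f(B) − A·f(I)·B for all n×n real matrices A, B. Let χ, χ̂ : ℝ → M_n(ℝ) be differentiable matrix-valued curves such that χ(t) is invertible for every t, χ'(t) = f(χ(t)), and χ̂'(t) = f(χ̂(t)). Then the right-invariant error η(t) = χ̂(t)·χ(t)⁻¹ satisfies the autonomous (state-trajectory-independent) differential equation η'(t) = f(η(t)) − η(t)·f(I). -/

import Mathlib

attribute [local instance] Matrix.normedAddCommGroup Matrix.normedSpace

section Aux
variable {n : ℕ} {t : ℝ}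

private lemma entry_hasDerivAt {a : ℝ → Matrix (Fin n) (Fin n) ℝ} {a' : Matrix (Fin n) (Fin n) ℝ}
    (ha : HasDerivAt a a' t) (i j : Fin n) :
    HasDerivAt (fun s => a s i j) (a' i j) t :=
  (hasDerivAt_pi.mp ((hasDerivAt_pi.mp ha) i)) j

private lemma matMul_hasDerivAt {a b : ℝ → Matrix (Fin n) (Fin n) ℝ}
    {a' b' : Matrix (Fin n) (Fin n) ℝ}
    (ha : HasDerivAt a a' t) (hb : HasDerivAt b b' t) :
    HasDerivAt (fun s => a s * b s) (a' * b t + a t * b') t := by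
  refine hasDerivAt_pi.mpr ?_
  intro i
  rw [hasDerivAt_pi]
  intro j
  have h : HasDerivAt (fun s => ∑ k, a s i k * b s k j)
      (∑ k, (a' i k * b t k j + a t i k * b' k j)) t :=
    HasDerivAt.fun_sum fun k _ => (entry_hasDerivAt ha i k).mul (entry_hasDerivAt hb k j)
  simpa [Matrix.mul_apply, Matrix.add_apply, Finset.sum_add_distrib] using h

private lemma det_differentiableAt {a : ℝ → Matrix (Fin n) (Fin n) ℝ}
    (ha : ∀ i j, DifferentiableAt ℝ (fun s => a s i j) t) :
    DifferentiableAt ℝ (fun s => (a s).det) t := by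
  simp only [Matrix.det_apply']
  exact DifferentiableAt.fun_sum fun σ _ =>
    ((DifferentiableAt.fun_finsetProd fun i _ => ha (σ i) i).const_mul _)

private lemma inv_differentiableAt {χ : ℝ → Matrix (Fin n) (Fin n) ℝ}
    (hinv : ∀ t, IsUnit (χ t))
    (hχ : ∀ t, DifferentiableAt ℝ χ t) :
    DifferentiableAt ℝ (fun s => (χ s)⁻¹) t := by
  have hent : ∀ i j, DifferentiableAt ℝ (fun s => χ s i j) t := by
    intro i j
    exact ((differentiableAt_pi.mp ((differentiableAt_pi.mp (hχ t)) i)) j)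
  have hdet : DifferentiableAt ℝ (fun s => (χ s).det) t := det_differentiableAt hent
  have hdetne : (χ t).det ≠ 0 := by
    have := (Matrix.isUnit_iff_isUnit_det _).mp (hinv t)
    exact IsUnit.ne_zero this
  have hadj : ∀ i j, DifferentiableAt ℝ (fun s => (χ s).adjugate i j) t := by
    intro i j
    simp only [Matrix.adjugate_apply]
    apply det_differentiableAt
    intro k l
    by_cases hk : k = j
    · simp [Matrix.updateRow_apply, hk]
    · simpa [Matrix.updateRow_apply, hk] using hent k l
  have : DifferentiableAt ℝ (fun s => ((χ s).det)⁻¹ • (χ s).adjugate) t := by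
    apply DifferentiableAt.smul (hdet.inv hdetne)
    refine differentiableAt_pi.mpr ?_
    intro i
    rw [differentiableAt_pi]
    exact hadj i
  convert this using 1
  funext s
  rw [Matrix.inv_def, Ring.inverse_eq_inv']

end Aux

/-- For a continuous-time group-affine dynamics `f`, the right-invariant error
`η = χ̂ · χ⁻¹` of two solutions satisfies the autonomous equation
`η' = f(η) − η · f(I)`. -/
theorem right_invariant_error_autonomous (n : ℕ)
    (f : Matrix (Fin n) (Fin n) ℝ → Matrix (Fin n) (Fin n) ℝ)
    (hf : ∀ A B : Matrix (Fin n) (Fin n) ℝ, f (A * B) = f A * B + A * f B - A * f 1 * B)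
    (χ χhat : ℝ → Matrix (Fin n) (Fin n) ℝ)
    (hinv : ∀ t, IsUnit (χ t))
    (hχ : ∀ t, HasDerivAt χ (f (χ t)) t)
    (hχhat : ∀ t, HasDerivAt χhat (f (χhat t)) t) (t : ℝ) :
    HasDerivAt (fun s => χhat s * (χ s)⁻¹)
      (f (χhat t * (χ t)⁻¹) - χhat t * (χ t)⁻¹ * f 1) t := by
  set ci : ℝ → Matrix (Fin n) (Fin n) ℝ := fun s => (χ s)⁻¹ with hci
  have hdInv : DifferentiableAt ℝ ci t :=
    inv_differentiableAt hinv (fun s => (hχ s).differentiableAt)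
  set D : Matrix (Fin n) (Fin n) ℝ := deriv ci t with hD
  have hDeriv : HasDerivAt ci D t := hdInv.hasDerivAt
  have h1 : χ t * ci t = 1 := Matrix.mul_nonsing_inv _
    ((Matrix.isUnit_iff_isUnit_det _).mp (hinv t))
  have h2 : ci t * χ t = 1 := Matrix.nonsing_inv_mul _
    ((Matrix.isUnit_iff_isUnit_det _).mp (hinv t))
  -- identify D
  have hconst : HasDerivAt (fun s => χ s * ci s) (0 : Matrix (Fin n) (Fin n) ℝ) t := by
    have : (fun s => χ s * ci s) = fun _ => (1 : Matrix (Fin n) (Fin n) ℝ) := by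
      funext s
      exact Matrix.mul_nonsing_inv _ ((Matrix.isUnit_iff_isUnit_det _).mp (hinv s))
    rw [this]
    exact hasDerivAt_const _ _
  have hprod : HasDerivAt (fun s => χ s * ci s) (f (χ t) * ci t + χ t * D) t :=
    matMul_hasDerivAt (hχ t) hDeriv
  have hzero : f (χ t) * ci t + χ t * D = 0 := hprod.unique hconst
  have hDval : D = -(ci t * (f (χ t) * ci t)) := by
    have h3 : χ t * D = -(f (χ t) * ci t) := by
      have := hzero
      linear_combination (norm := noncomm_ring) this
    calc D = (ci t * χ t) * D := by rw [h2, one_mul]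
    _ = ci t * (χ t * D) := by rw [Matrix.mul_assoc]
    _ = -(ci t * (f (χ t) * ci t)) := by rw [h3, Matrix.mul_neg]
  have hmain : HasDerivAt (fun s => χhat s * ci s) (f (χhat t) * ci t + χhat t * D) t :=
    matMul_hasDerivAt (hχhat t) hDeriv
  have hkey : f (χhat t) * ci t + χhat t * D
      = f (χhat t * ci t) - χhat t * ci t * f 1 := by
    have hη : (χhat t * ci t) * χ t = χhat t := by
      rw [Matrix.mul_assoc, h2, mul_one]
    have hfeq := hf (χhat t * ci t) (χ t)
    rw [hη] at hfeq
    rw [hfeq, hDval]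
    simp only [Matrix.mul_neg, add_mul, sub_mul, Matrix.mul_assoc, h1, h2, mul_one]
    noncomm_ring
  rw [hkey] at hmain
  exact hmain
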